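/- Let G = ⟨a⟩ × ⟨b⟩ be free abelian of rank two and A a Schur ring over G such that ⟨a⟩ is an A-subgroup, {a^i, a^{-i}} is a basic set for all i, and the basic set containing b is D = {a^n b, b} for some nonzero integer n. Then for all integers i, j, the set {a^i b^j, a^{nj-i} b^j} is a basic set of A; consequently A equals the orbit Schur ring of the order-2 automorphism φ₂ with φ₂(a)=a^{-1}, φ₂(b)=a^n b. -/

import Mathlib

noncomputable def simpleQuantity (F : Type*) [Field F] {G : Type*} [Group G]
    (D : Finset G) : MonoidAlgebra F G :=
  ∑ g ∈ D, MonoidAlgebra.single g 1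

structure SchurRing (F G : Type*) [Field F] [Group G] where
  parts : Set (Finset G)
  parts_nonempty : ∀ D ∈ parts, D.Nonempty
  cover : ∀ g : G, ∃ D ∈ parts, g ∈ D
  eq_of_mem : ∀ D₁ ∈ parts, ∀ D₂ ∈ parts, ∀ g : G, g ∈ D₁ → g ∈ D₂ → D₁ = D₂
  one_mem : ({1} : Finset G) ∈ parts
  inv_mem : ∀ D ∈ parts, ∃ D' ∈ parts, ∀ g : G, g ∈ D' ↔ g⁻¹ ∈ D
  mul_mem : ∀ x ∈ Submodule.span F (simpleQuantity F '' parts),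
    ∀ y ∈ Submodule.span F (simpleQuantity F '' parts),
    x * y ∈ Submodule.span F (simpleQuantity F '' parts)

noncomputable def SchurRing.span {F G : Type*} [Field F] [Group G] (A : SchurRing F G) :
    Submodule F (MonoidAlgebra F G) :=
  Submodule.span F (simpleQuantity F '' A.parts)

def SchurRing.IsASet {F G : Type*} [Field F] [Group G] (A : SchurRing F G)
    (S : Set G) : Prop :=
  ∀ D ∈ A.parts, (∃ g ∈ D, g ∈ S) → ↑D ⊆ S

/-- The free abelian group of rank two, written multiplicatively. -/
abbrev Z2 := Multiplicative (ℤ × ℤ)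

/-- The first generator `a` of `Z × Z`. -/
def ga : Z2 := Multiplicative.ofAdd (1, 0)

/-- The second generator `b` of `Z × Z`. -/
def gb : Z2 := Multiplicative.ofAdd (0, 1)

/-! ### Auxiliary material -/

def ee (i j : ℤ) : Z2 := Multiplicative.ofAdd (i, j)

lemma ee_mul (i j k l : ℤ) : ee i j * ee k l = ee (i+k) (j+l) := rfl

lemma ee_inv (i j : ℤ) : (ee i j)⁻¹ = ee (-i) (-j) := rfl

lemma ee_inj {i j k l : ℤ} : ee i j = ee k l ↔ i = k ∧ j = l := by
  constructor
  · intro h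
    have := congrArg Multiplicative.toAdd h
    exact Prod.mk.injEq .. ▸ Prod.ext_iff.mp this
  · rintro ⟨rfl, rfl⟩; rfl

lemma ga_zpow (i : ℤ) : ga ^ i = ee i 0 := by
  show Multiplicative.ofAdd (1,0) ^ i = _
  rw [← ofAdd_zsmul]
  norm_num [ee]

lemma gb_zpow (j : ℤ) : gb ^ j = ee 0 j := by
  show Multiplicative.ofAdd (0,1) ^ j = _
  rw [← ofAdd_zsmul]
  norm_num [ee]

lemma gagb (i j : ℤ) : ga ^ i * gb ^ j = ee i j := by
  rw [ga_zpow, gb_zpow, ee_mul]; norm_num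

lemma sq_apply {F : Type*} [Field F] {G : Type*} [Group G] [DecidableEq G] (D : Finset G) (h : G) :
    (simpleQuantity F D).coeff h = if h ∈ D then 1 else 0 := by
  classical
  rw [simpleQuantity, MonoidAlgebra.coeff_sum, Finsupp.finset_sum_apply]
  simp [MonoidAlgebra.coeff_single, Finsupp.single_apply]

lemma coeff_const {F : Type*} [Field F] {G : Type*} [Group G] (A : SchurRing F G)
    {x : MonoidAlgebra F G} (hx : x ∈ Submodule.span F (simpleQuantity F '' A.parts))
    {D : Finset G} (hD : D ∈ A.parts) {g h : G} (hg : g ∈ D) (hh : h ∈ D) :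
    x.coeff g = x.coeff h := by
  classical
  induction hx using Submodule.span_induction with
  | mem y hy =>
    obtain ⟨D', hD', rfl⟩ := hy
    rw [sq_apply, sq_apply]
    by_cases hgD : g ∈ D'
    · rw [if_pos hgD, if_pos (A.eq_of_mem D hD D' hD' g hg hgD ▸ hh)]
    · rw [if_neg hgD, if_neg (fun hhD => hgD (A.eq_of_mem D' hD' D hD h hhD hh ▸ hg))]
  | zero => rfl
  | add a b _ _ ha hb => rw [MonoidAlgebra.coeff_add, Finsupp.add_apply, Finsupp.add_apply, ha, hb]
  | smul c a _ ha => rw [MonoidAlgebra.coeff_smul_apply, MonoidAlgebra.coeff_smul_apply, ha]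

lemma sq_mem {F : Type*} [Field F] {G : Type*} [Group G] (A : SchurRing F G)
    {D : Finset G} (hD : D ∈ A.parts) :
    simpleQuantity F D ∈ Submodule.span F (simpleQuantity F '' A.parts) :=
  Submodule.subset_span ⟨D, hD, rfl⟩

lemma sq_pair {F : Type*} [Field F] {G : Type*} [Group G] [DecidableEq G] {x y : G} (hxy : x ≠ y) :
    simpleQuantity F {x, y} = MonoidAlgebra.single x 1 + MonoidAlgebra.single y 1 := by
  rw [simpleQuantity, Finset.sum_pair hxy]

lemma sq_single {F : Type*} [Field F] {G : Type*} [Group G] (x : G) :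
    simpleQuantity F {x} = MonoidAlgebra.single x 1 := by
  rw [simpleQuantity, Finset.sum_singleton]

lemma inv_pair {F : Type*} [Field F] {G : Type*} [Group G] [DecidableEq G] (A : SchurRing F G)
    {x y : G} (h : ({x, y} : Finset G) ∈ A.parts) : ({x⁻¹, y⁻¹} : Finset G) ∈ A.parts := by
  obtain ⟨D', hD', hiff⟩ := A.inv_mem _ h
  have : D' = {x⁻¹, y⁻¹} := by
    ext g
    rw [hiff]
    simp only [Finset.mem_insert, Finset.mem_singleton]
    constructor
    · rintro (h | h) <;> [left; right] <;> rw [← h, inv_inv]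
    · rintro (rfl | rfl) <;> simp
  exact this ▸ hD'

lemma expand22 {F : Type*} [Field F] {G : Type*} [Group G] [DecidableEq G]
    {x1 y1 x2 y2 : G} (h1 : x1 ≠ y1) (h2 : x2 ≠ y2) :
    simpleQuantity F {x1, y1} * simpleQuantity F {x2, y2} =
      MonoidAlgebra.single (x1*x2) 1 + MonoidAlgebra.single (x1*y2) 1 +
      MonoidAlgebra.single (y1*x2) 1 + MonoidAlgebra.single (y1*y2) 1 := by
  rw [sq_pair h1, sq_pair h2]
  simp only [mul_add, add_mul, MonoidAlgebra.single_mul_single, one_mul]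
  abel

lemma expand12 {F : Type*} [Field F] {G : Type*} [Group G] [DecidableEq G]
    (x1 : G) {x2 y2 : G} (h2 : x2 ≠ y2) :
    simpleQuantity F {x1} * simpleQuantity F {x2, y2} =
      MonoidAlgebra.single (x1*x2) 1 + MonoidAlgebra.single (x1*y2) 1 := by
  rw [sq_single, sq_pair h2]
  simp only [mul_add, MonoidAlgebra.single_mul_single, one_mul]

lemma app2 {F : Type*} [Field F] (a b h : Z2) :
    ((MonoidAlgebra.single a (1:F) + MonoidAlgebra.single b 1 : MonoidAlgebra F Z2)).coeff h =
      (if a = h then (1:F) else 0) + (if b = h then 1 else 0) := by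
  rw [MonoidAlgebra.coeff_add, Finsupp.add_apply]
  rw [show (MonoidAlgebra.single a (1:F)).coeff h = if a = h then (1:F) else 0 from MonoidAlgebra.coeff_single_apply]
  rw [show (MonoidAlgebra.single b (1:F)).coeff h = if b = h then (1:F) else 0 from MonoidAlgebra.coeff_single_apply]

lemma app4 {F : Type*} [Field F] (a b c d h : Z2) :
    (MonoidAlgebra.single a (1:F) + MonoidAlgebra.single b 1 +
     MonoidAlgebra.single c 1 + MonoidAlgebra.single d 1 : MonoidAlgebra F Z2).coeff h =
      (if a = h then (1:F) else 0) + (if b = h then 1 else 0) +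
      (if c = h then 1 else 0) + (if d = h then 1 else 0) := by
  rw [MonoidAlgebra.coeff_add, MonoidAlgebra.coeff_add, MonoidAlgebra.coeff_add,
    Finsupp.add_apply, Finsupp.add_apply, Finsupp.add_apply]
  rw [show (MonoidAlgebra.single a (1:F)).coeff h = if a = h then (1:F) else 0 from MonoidAlgebra.coeff_single_apply]
  rw [show (MonoidAlgebra.single b (1:F)).coeff h = if b = h then (1:F) else 0 from MonoidAlgebra.coeff_single_apply]
  rw [show (MonoidAlgebra.single c (1:F)).coeff h = if c = h then (1:F) else 0 from MonoidAlgebra.coeff_single_apply]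
  rw [show (MonoidAlgebra.single d (1:F)).coeff h = if d = h then (1:F) else 0 from MonoidAlgebra.coeff_single_apply]

def phiAdd (n : ℤ) : (ℤ × ℤ) ≃+ (ℤ × ℤ) where
  toFun p := (n * p.2 - p.1, p.2)
  invFun p := (n * p.2 - p.1, p.2)
  left_inv p := by simp [Prod.ext_iff]
  right_inv p := by simp [Prod.ext_iff]
  map_add' p q := by simp [Prod.ext_iff]; ring

noncomputable def phi (n : ℤ) : MulAut Z2 := AddEquiv.toMultiplicative (phiAdd n)

lemma phi_apply (n i j : ℤ) : phi n (ee i j) = ee (n*j - i) j := rfl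

set_option maxHeartbeats 3200000 in
lemma row_step {F : Type*} [Field F] [CharZero F] (A : SchurRing F Z2) {n : ℤ} (hn : n ≠ 0)
    (hb : ({ee n 1, ee 0 1} : Finset Z2) ∈ A.parts)
    (hbinv : ({ee (-n) (-1), ee 0 (-1)} : Finset Z2) ∈ A.parts)
    {J : ℤ} (IH : ∀ i : ℤ, ({ee i J, ee (n*J - i) J} : Finset Z2) ∈ A.parts) :
    ∀ i : ℤ, ({ee i (J+1), ee (n*(J+1) - i) (J+1)} : Finset Z2) ∈ A.parts := by
  obtain ⟨m, hm⟩ : ∃ m, n * J = m := ⟨_, rfl⟩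
  have hIH : ∀ i : ℤ, ({ee i J, ee (m - i) J} : Finset Z2) ∈ A.parts := by
    intro i; have h := IH i; rwa [hm] at h
  have hDne : ee n 1 ≠ ee 0 1 := by rw [Ne, ee_inj]; omega
  have hDinvne : ee (-n) (-1) ≠ ee 0 (-1) := by rw [Ne, ee_inj]; omega
  -- B1: parts are inside the orbit
  have hsub : ∀ k : ℤ, 2*k ≠ m + n → ∀ P ∈ A.parts, ee k (J+1) ∈ P →
      ∀ h ∈ P, h = ee k (J+1) ∨ h = ee (m+n-k) (J+1) := by
    intro k hk2 P hP hkP h hh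
    obtain ⟨⟨p, q⟩, rfl⟩ : ∃ z : ℤ × ℤ, h = ee z.1 z.2 := ⟨Multiplicative.toAdd h, rfl⟩
    by_cases hdeg : 2*k = m
    · -- previous part collapsed; a single product suffices
      have hPp : ({ee k J} : Finset Z2) ∈ A.parts := by
        have h0 := hIH k
        rwa [show ee (m-k) J = ee k J from by rw [ee_inj]; omega,
          Finset.pair_eq_singleton] at h0
      have hu := expand12 (F := F) (ee k J) hDne
      have humem := A.mul_mem _ (sq_mem A hPp) _ (sq_mem A hb)
      rw [hu] at humem
      have hval : (MonoidAlgebra.single (ee k J * ee n 1) (1:F) +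
          MonoidAlgebra.single (ee k J * ee 0 1) 1 : MonoidAlgebra F Z2).coeff (ee k (J+1)) = 1 := by
        rw [ee_mul, ee_mul, app2]
        simp only [ee_inj, and_true]
        split_ifs <;> first | (exfalso; omega) | norm_num
      have hc := coeff_const A humem hP hh hkP
      rw [hval, ee_mul, ee_mul, app2] at hc
      simp only [ee_inj, and_true] at hc
      simp only [ee_inj, and_true]
      split_ifs at hc <;> first | omega | (norm_num at hc; done)
    · -- previous part has two elements
      have hne1 : ee k J ≠ ee (m-k) J := by rw [Ne, ee_inj]; omega
      have hu := expand22 (F := F) hne1 hDne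
      have humem := A.mul_mem _ (sq_mem A (hIH k)) _ (sq_mem A hb)
      rw [hu] at humem
      have hval : (MonoidAlgebra.single (ee k J * ee n 1) (1:F) +
          MonoidAlgebra.single (ee k J * ee 0 1) 1 +
          MonoidAlgebra.single (ee (m-k) J * ee n 1) 1 +
          MonoidAlgebra.single (ee (m-k) J * ee 0 1) 1 : MonoidAlgebra F Z2).coeff (ee k (J+1)) = 1 := by
        rw [ee_mul, ee_mul, ee_mul, ee_mul, app4]
        simp only [ee_inj, and_true]
        split_ifs <;> first | (exfalso; omega) | norm_num
      have hc := coeff_const A humem hP hh hkP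
      rw [hval, ee_mul, ee_mul, ee_mul, ee_mul, app4] at hc
      simp only [ee_inj, and_true] at hc
      -- second product, from the part of ee (k-n) J
      by_cases hdeg2 : 2*k = m + 2*n
      · have hPp2 : ({ee (k-n) J} : Finset Z2) ∈ A.parts := by
          have h0 := hIH (k-n)
          rwa [show ee (m-(k-n)) J = ee (k-n) J from by rw [ee_inj]; omega,
            Finset.pair_eq_singleton] at h0
        have hv := expand12 (F := F) (ee (k-n) J) hDne
        have hvmem := A.mul_mem _ (sq_mem A hPp2) _ (sq_mem A hb)
        rw [hv] at hvmem
        have hval2 : (MonoidAlgebra.single (ee (k-n) J * ee n 1) (1:F) +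
            MonoidAlgebra.single (ee (k-n) J * ee 0 1) 1 : MonoidAlgebra F Z2).coeff (ee k (J+1)) = 1 := by
          rw [ee_mul, ee_mul, app2]
          simp only [ee_inj, and_true]
          split_ifs <;> first | (exfalso; omega) | norm_num
        have hc2 := coeff_const A hvmem hP hh hkP
        rw [hval2, ee_mul, ee_mul, app2] at hc2
        simp only [ee_inj, and_true] at hc2
        simp only [ee_inj, and_true]
        clear hu humem hv hvmem IH hIH hb hbinv hP hkP hh
        split_ifs at hc <;> split_ifs at hc2 <;>
          first | omega | (norm_num at hc; done) | (norm_num at hc2; done)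
      · have hne2 : ee (k-n) J ≠ ee (m-(k-n)) J := by rw [Ne, ee_inj]; omega
        have hv := expand22 (F := F) hne2 hDne
        have hvmem := A.mul_mem _ (sq_mem A (hIH (k-n))) _ (sq_mem A hb)
        rw [hv] at hvmem
        have hval2 : (MonoidAlgebra.single (ee (k-n) J * ee n 1) (1:F) +
            MonoidAlgebra.single (ee (k-n) J * ee 0 1) 1 +
            MonoidAlgebra.single (ee (m-(k-n)) J * ee n 1) 1 +
            MonoidAlgebra.single (ee (m-(k-n)) J * ee 0 1) 1 : MonoidAlgebra F Z2).coeff (ee k (J+1)) = 1 := by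
          rw [ee_mul, ee_mul, ee_mul, ee_mul, app4]
          simp only [ee_inj, and_true]
          split_ifs <;> first | (exfalso; omega) | norm_num
        have hc2 := coeff_const A hvmem hP hh hkP
        rw [hval2, ee_mul, ee_mul, ee_mul, ee_mul, app4] at hc2
        simp only [ee_inj, and_true] at hc2
        simp only [ee_inj, and_true]
        clear hu humem hv hvmem IH hIH hb hbinv hP hkP hh
        split_ifs at hc <;> split_ifs at hc2 <;>
          first | omega | (norm_num at hc; done) | (norm_num at hc2; done)
  -- A: degenerate orbits are singleton parts
  have hA : ∀ k : ℤ, 2*k = m + n → ∀ P ∈ A.parts, ee k (J+1) ∈ P →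
      ∀ h ∈ P, h = ee k (J+1) := by
    intro k hk2 P hP hkP h hh
    obtain ⟨⟨p, q⟩, rfl⟩ : ∃ z : ℤ × ℤ, h = ee z.1 z.2 := ⟨Multiplicative.toAdd h, rfl⟩
    have hne1 : ee k J ≠ ee (m-k) J := by rw [Ne, ee_inj]; omega
    have hu := expand22 (F := F) hne1 hDne
    have humem := A.mul_mem _ (sq_mem A (hIH k)) _ (sq_mem A hb)
    rw [hu] at humem
    have hval : (MonoidAlgebra.single (ee k J * ee n 1) (1:F) +
        MonoidAlgebra.single (ee k J * ee 0 1) 1 +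
        MonoidAlgebra.single (ee (m-k) J * ee n 1) 1 +
        MonoidAlgebra.single (ee (m-k) J * ee 0 1) 1 : MonoidAlgebra F Z2).coeff (ee k (J+1)) = 2 := by
      rw [ee_mul, ee_mul, ee_mul, ee_mul, app4]
      simp only [ee_inj, and_true]
      split_ifs <;> first | (exfalso; omega) | norm_num
    have hc := coeff_const A humem hP hh hkP
    rw [hval, ee_mul, ee_mul, ee_mul, ee_mul, app4] at hc
    simp only [ee_inj, and_true] at hc
    rw [ee_inj]
    split_ifs at hc <;> first | omega | (norm_num at hc; done)
  -- now the main argument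
  intro i
  rw [show n*(J+1) - i = m + n - i from by rw [← hm]; ring]
  obtain ⟨P, hP, hiP⟩ := A.cover (ee i (J+1))
  by_cases hcase : 2*i = m + n
  · have hPsing : P = {ee i (J+1)} :=
      Finset.eq_singleton_iff_unique_mem.mpr ⟨hiP, fun h hh => hA i hcase P hP hiP h hh⟩
    rw [show ee (m+n-i) (J+1) = ee i (J+1) from by rw [ee_inj]; omega,
      Finset.pair_eq_singleton]
    exact hPsing ▸ hP
  · have hPsub := hsub i hcase P hP hiP
    by_cases hmem : ee (m+n-i) (J+1) ∈ P
    · have : P = {ee i (J+1), ee (m+n-i) (J+1)} := by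
        apply Finset.Subset.antisymm
        · intro h hh
          rcases hPsub h hh with rfl | rfl
          · exact Finset.mem_insert_self _ _
          · exact Finset.mem_insert_of_mem (Finset.mem_singleton_self _)
        · exact Finset.insert_subset_iff.mpr ⟨hiP, Finset.singleton_subset_iff.mpr hmem⟩
      exact this ▸ hP
    · exfalso
      obtain ⟨Q, hQ, hiQ⟩ := A.cover (ee (m+n-i) (J+1))
      have hQsub := hsub (m+n-i) (by omega) Q hQ hiQ
      have hiQ' : ee i (J+1) ∉ Q := fun hin =>
        hmem (A.eq_of_mem Q hQ P hP _ hin hiP ▸ hiQ)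
      have hPsing : P = {ee i (J+1)} := by
        apply Finset.eq_singleton_iff_unique_mem.mpr
        refine ⟨hiP, fun h hh => ?_⟩
        rcases hPsub h hh with rfl | rfl
        · rfl
        · exact absurd hh hmem
      have hQsing : Q = {ee (m+n-i) (J+1)} := by
        apply Finset.eq_singleton_iff_unique_mem.mpr
        refine ⟨hiQ, fun h hh => ?_⟩
        rcases hQsub h hh with rfl | rfl
        · rfl
        · exact absurd (show ee (m+n-(m+n-i)) (J+1) = ee i (J+1) from by rw [ee_inj]; omega)
            (fun he => hiQ' (he ▸ hh))
      by_cases hw : 2*i = m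
      · -- use Q and the inverse of the basic set of b
        have hQ' : ({ee (m+n-i) (J+1)} : Finset Z2) ∈ A.parts := hQsing ▸ hQ
        have hw' := expand12 (F := F) (ee (m+n-i) (J+1)) hDinvne
        have hwmem := A.mul_mem _ (sq_mem A hQ') _ (sq_mem A hbinv)
        rw [hw'] at hwmem
        have hcc := coeff_const A hwmem (hIH (m+n-i))
          (Finset.mem_insert_self _ _)
          (Finset.mem_insert_of_mem (Finset.mem_singleton_self _))
        rw [ee_mul, ee_mul, app2, app2] at hcc
        simp only [ee_inj, and_true] at hcc
        split_ifs at hcc <;> first | omega | (norm_num at hcc; done)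
      · have hP' : ({ee i (J+1)} : Finset Z2) ∈ A.parts := hPsing ▸ hP
        have hw' := expand12 (F := F) (ee i (J+1)) hDinvne
        have hwmem := A.mul_mem _ (sq_mem A hP') _ (sq_mem A hbinv)
        rw [hw'] at hwmem
        have hcc := coeff_const A hwmem (hIH i)
          (Finset.mem_insert_self _ _)
          (Finset.mem_insert_of_mem (Finset.mem_singleton_self _))
        rw [ee_mul, ee_mul, app2, app2] at hcc
        simp only [ee_inj, and_true] at hcc
        split_ifs at hcc <;> first | omega | (norm_num at hcc; done)

lemma all_rows {F : Type*} [Field F] [CharZero F] (A : SchurRing F Z2) {n : ℤ} (hn : n ≠ 0)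
    (hai : ∀ i : ℤ, ({ga ^ i, ga ^ (-i)} : Finset Z2) ∈ A.parts)
    (hb : ({ee n 1, ee 0 1} : Finset Z2) ∈ A.parts) :
    ∀ j i : ℤ, ({ee i j, ee (n*j - i) j} : Finset Z2) ∈ A.parts := by
  have hbinv : ({ee (-n) (-1), ee 0 (-1)} : Finset Z2) ∈ A.parts := by
    have h := inv_pair A hb
    rwa [ee_inv, ee_inv] at h
  have hrow0 : ∀ i : ℤ, ({ee i 0, ee (n*0 - i) 0} : Finset Z2) ∈ A.parts := by
    intro i
    have h := hai i
    rw [ga_zpow, ga_zpow] at h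
    rwa [show n*0 - i = -i by ring]
  have hrows : ∀ (k : ℕ) (i : ℤ), ({ee i (k:ℤ), ee (n*(k:ℤ) - i) (k:ℤ)} : Finset Z2) ∈ A.parts := by
    intro k
    induction k with
    | zero => exact_mod_cast hrow0
    | succ k IHk =>
      intro i
      have h := row_step A hn hb hbinv IHk i
      have hc : ((k:ℤ) + 1) = ((k+1 : ℕ) : ℤ) := by push_cast; ring
      rwa [hc] at h
  intro j i
  rcases le_or_gt 0 j with hj | hj
  · obtain ⟨k, rfl⟩ : ∃ k : ℕ, (k:ℤ) = j := ⟨j.toNat, Int.toNat_of_nonneg hj⟩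
    exact hrows k i
  · have ht : (((-j).toNat : ℕ) : ℤ) = -j := Int.toNat_of_nonneg (by omega)
    have h1 := hrows (-j).toNat (-i)
    rw [ht] at h1
    have h2 := inv_pair A h1
    rw [ee_inv, ee_inv] at h2
    rwa [show -(-i) = i by ring, show -(-j) = j by ring,
      show -(n * -j - -i) = n*j - i by ring] at h2

theorem orbit_schurRing_of_case {F : Type*} [Field F] [CharZero F]
    (A : SchurRing F Z2) (ha : A.IsASet ↑(Subgroup.zpowers ga))
    (hai : ∀ i : ℤ, ({ga ^ i, ga ^ (-i)} : Finset Z2) ∈ A.parts)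
    (n : ℤ) (hn : n ≠ 0) (hb : ({ga ^ n * gb, gb} : Finset Z2) ∈ A.parts) :
    (∀ i j : ℤ, ({ga ^ i * gb ^ j, ga ^ (n * j - i) * gb ^ j} : Finset Z2) ∈ A.parts) ∧
    ∃ φ : MulAut Z2, φ ga = ga⁻¹ ∧ φ gb = ga ^ n * gb ∧ orderOf φ = 2 ∧
      A.parts = {D : Finset Z2 | ∃ g : Z2, D = {g, φ g}} := by
  have hb' : ({ee n 1, ee 0 1} : Finset Z2) ∈ A.parts := by
    have h := hb
    rwa [show ga ^ n * gb = ee n 1 from by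
      rw [show gb = gb ^ (1:ℤ) from (zpow_one gb).symm, gagb],
      show gb = ee 0 1 from rfl] at h
  have main := all_rows A hn hai hb'
  constructor
  · intro i j
    rw [gagb, gagb]
    exact main j i
  · refine ⟨phi n, ?_, ?_, ?_, ?_⟩
    · show phi n (ee 1 0) = (ee 1 0)⁻¹
      rw [phi_apply, ee_inv]
      rw [ee_inj]
      constructor <;> ring
    · show phi n (ee 0 1) = ga ^ n * gb
      rw [phi_apply, show ga ^ n * gb = ee n 1 from by
        rw [show gb = gb ^ (1:ℤ) from (zpow_one gb).symm, gagb]]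
      rw [ee_inj]
      constructor <;> ring
    · haveI : Fact (Nat.Prime 2) := ⟨by norm_num⟩
      apply orderOf_eq_prime
      · refine MulEquiv.ext fun g => ?_
        obtain ⟨⟨p, q⟩, rfl⟩ : ∃ z : ℤ × ℤ, g = ee z.1 z.2 := ⟨Multiplicative.toAdd g, rfl⟩
        rw [pow_two, MulAut.mul_apply, phi_apply, phi_apply]
        show _ = ee p q
        rw [ee_inj]
        constructor <;> ring
      · intro hphi
        have : phi n (ee 1 0) = ee 1 0 := by rw [hphi]; rfl
        rw [phi_apply, ee_inj] at this
        omega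
    · ext D
      constructor
      · intro hD
        obtain ⟨g, hg⟩ := A.parts_nonempty D hD
        obtain ⟨⟨p, q⟩, rfl⟩ : ∃ z : ℤ × ℤ, g = ee z.1 z.2 := ⟨Multiplicative.toAdd g, rfl⟩
        refine ⟨ee p q, ?_⟩
        rw [phi_apply]
        exact A.eq_of_mem D hD _ (main q p) _ hg (Finset.mem_insert_self _ _)
      · rintro ⟨g, rfl⟩
        obtain ⟨⟨p, q⟩, rfl⟩ : ∃ z : ℤ × ℤ, g = ee z.1 z.2 := ⟨Multiplicative.toAdd g, rfl⟩
        rw [phi_apply]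
        exact main q p
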